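/- Tropicalized coefficient dynamics of the A_m⁽¹⁾ sequence: let m ≥ 2 and let Y₁, …, Y_{m+1} : ℤ → ℤ satisfy, for all j ∈ ℤ: Y₁(j+1) = Y₂(j) + Y₁(j) − min(0, Y₁(j)); Y_m(j+1) = Y_{m+1}(j) + Y₁(j) − min(0, Y₁(j)); Y_{m+1}(j+1) = −Y₁(j); and Y_i(j+1) = Y_{i+1}(j) for 2 ≤ i ≤ m−1. Then the sequence c := Y₁ satisfies c(j+1) + c(j−m) = max(0, c(j)) + max(0, c(j−m+1)) for all j ∈ ℤ. -/
import Mathlib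


/-- Tropicalized coefficient dynamics of the `A_m⁽¹⁾` sequence: the exponent sequence
`c = Y₁` of each frozen variable satisfies the tropical coefficient recurrence. -/
theorem am1_tropical_coeff_recurrence (m : ℕ) (hm : 2 ≤ m) (Y : ℕ → ℤ → ℤ)
    (h1 : ∀ j : ℤ, Y 1 (j + 1) = Y 2 j + Y 1 j - min 0 (Y 1 j))
    (h2 : ∀ j : ℤ, Y m (j + 1) = Y (m + 1) j + Y 1 j - min 0 (Y 1 j))
    (h3 : ∀ j : ℤ, Y (m + 1) (j + 1) = -(Y 1 j))
    (h4 : ∀ j : ℤ, ∀ i : ℕ, 2 ≤ i → i ≤ m - 1 → Y i (j + 1) = Y (i + 1) j) :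
    ∀ j : ℤ, Y 1 (j + 1) + Y 1 (j - m) = max 0 (Y 1 j) + max 0 (Y 1 (j - m + 1)) := by
  intro j
  -- chain: Y 2 j = Y (2 + k) (j - k) for k ≤ m - 2
  have chain : ∀ k : ℕ, k ≤ m - 2 → Y 2 j = Y (2 + k) (j - k) := by
    intro k
    induction k with
    | zero => intro _; simp
    | succ k ih =>
      intro hk
      have hk' : k ≤ m - 2 := by omega
      rw [ih hk']
      have := h4 (j - k - 1) (2 + k) (by omega) (by omega)
      have harg : j - (k : ℤ) - 1 + 1 = j - k := by ring
      rw [harg] at this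
      rw [this]
      congr 1
      push_cast; ring
  have hc := chain (m - 2) (le_refl _)
  have hmc : 2 + (m - 2) = m := by omega
  rw [hmc] at hc
  have e1 := h1 j
  have e2 := h2 (j - m + 1)
  have e3 := h3 (j - m)
  have harg2 : j - (m : ℤ) + 1 + 1 = j - ((m : ℕ) - 2 : ℕ) := by
    have : ((m - 2 : ℕ) : ℤ) = (m : ℤ) - 2 := by push_cast [hm]; ring
    rw [this]; ring
  have harg3 : j - (m : ℤ) + 1 = j - m + 1 := rfl
  rw [harg2] at e2
  rw [show j - (m : ℤ) + 1 = (j - m) + 1 from rfl] at e3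
  rw [e3] at e2
  rw [hc, e2] at e1
  rw [e1]
  omega
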